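/- Let n ≥ 1 and N = 2^n. Let t₁, t₇ ∈ F₂ⁿ have disjoint supports (t₁ ∗ t₇ = 0), set t = t₁ + 7t₇ ∈ {0,1,7}ⁿ and t′ = t₁ + t₇ ∈ F₂ⁿ, and let T^{⊗t} be the N × N diagonal matrix with (v,v) entry e^{iπ(v·t)/4} (i.e. T is applied on supp(t₁) and T† = T⁷ on supp(t₇)). Then for all a, b ∈ F₂ⁿ: T^{⊗t} E(a,b) (T^{⊗t})† = 2^{−w_H(a ∗ t′)/2} · Σ_{y ⪯ a ∗ t′} (−1)^{(b + t₇)·y} E(a, b ⊕ y), where the sum runs over all y ∈ F₂ⁿ with supp(y) ⊆ supp(a ∗ t′). -/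

import Mathlib

open Matrix

noncomputable section

/-- The Hermitian Pauli matrix `E(a,b)` on `n` qubits. -/
def PauliE {n : ℕ} (a b : Fin n → ZMod 2) :
    Matrix (Fin n → ZMod 2) (Fin n → ZMod 2) ℂ :=
  Matrix.of fun u v =>
    Complex.I ^ ((∑ i, (a i).val * (b i).val) % 4) *
      (-1 : ℂ) ^ (∑ i, (v i).val * (b i).val) *
      (if u = v + a then (1 : ℂ) else 0)

/-- Hamming weight of a binary vector. -/
def wHam {n : ℕ} (a : Fin n → ZMod 2) : ℕ := ∑ i, (a i).val

/-- `T^{⊗t}` for an integer vector `t`: the diagonal matrix with `(v,v)` entry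
`e^{iπ (v·t)/4}`. -/
def transTvec {n : ℕ} (t : Fin n → ℤ) : Matrix (Fin n → ZMod 2) (Fin n → ZMod 2) ℂ :=
  Matrix.diagonal fun v =>
    Complex.exp ((Real.pi : ℂ) * Complex.I / 4) ^ (∑ i, ((v i).val : ℤ) * t i)

namespace TTaux
open Complex

def ω : ℂ := Complex.exp ((Real.pi:ℂ) * Complex.I / 4)

lemma sqrt2_sq : (Real.sqrt 2 : ℂ) * (Real.sqrt 2:ℂ) = 2 := by
  rw [← Complex.ofReal_mul, Real.mul_self_sqrt (by norm_num)]; norm_num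

lemma sqrt2_ne : (Real.sqrt 2 : ℂ) ≠ 0 := by
  simpa using Real.sqrt_ne_zero'.2 (by norm_num : (0:ℝ) < 2)

lemma omega_ne : ω ≠ 0 := Complex.exp_ne_zero _

lemma omega_eq : ω = (1 + I) / (Real.sqrt 2:ℂ) := by
  rw [eq_div_iff sqrt2_ne, mul_comm, ω,
    show (Real.pi:ℂ) * I / 4 = (Real.pi/4 : ℝ) * I by push_cast; ring, Complex.exp_mul_I,
    ← Complex.ofReal_cos, ← Complex.ofReal_sin, Real.cos_pi_div_four, Real.sin_pi_div_four]
  push_cast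
  linear_combination (1 + I) / 2 * sqrt2_sq

lemma omega_inv : ω⁻¹ = (1 - I) / (Real.sqrt 2:ℂ) := by
  refine inv_eq_of_mul_eq_one_right ?_
  rw [omega_eq, div_mul_div_comm]
  rw [div_eq_one_iff_eq (by simpa using sqrt2_ne)]
  linear_combination -sqrt2_sq - Complex.I_sq

lemma omega_pow7 : ω ^ (7:ℕ) = (1 - I) / (Real.sqrt 2:ℂ) := by
  have h8 : ω ^ (8:ℕ) = 1 := by
    rw [ω, ← Complex.exp_nat_mul,
      show (8:ℕ) * ((Real.pi:ℂ) * I / 4) = 2 * Real.pi * I by push_cast; ring]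
    exact Complex.exp_two_pi_mul_I
  have : ω ^ (7:ℕ) * ω = 1 := by rw [← pow_succ]; exact h8
  rw [← omega_inv]
  field_simp [omega_ne] at this ⊢
  linear_combination this

lemma omega_pow7_inv : (ω ^ (7:ℕ))⁻¹ = (1 + I) / (Real.sqrt 2:ℂ) := by
  rw [omega_pow7]
  refine inv_eq_of_mul_eq_one_left ?_
  rw [div_mul_div_comm, div_eq_one_iff_eq (by simpa using sqrt2_ne)]
  linear_combination -sqrt2_sq - Complex.I_sq

lemma z2 (x : ZMod 2) : x = 0 ∨ x = 1 := by revert x; decide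

lemma zmodsum (f : ZMod 2 → ℂ) : ∑ x, f x = f 0 + f 1 := Fin.sum_univ_two f

lemma coord (a b v t1 t7 : ZMod 2) (h : t1 * t7 = 0) :
  ω ^ ((((v + a).val : ℤ) * ((t1.val:ℤ) + 7*(t7.val:ℤ)) - ((v.val:ℤ) * ((t1.val:ℤ) + 7*(t7.val:ℤ))))) * (Complex.I ^ (a.val * b.val) * (-1:ℂ) ^ (v.val * b.val))
  = ∑ c ∈ (if a * (t1 + t7) = 0 then ({0} : Finset (ZMod 2)) else Finset.univ),
      ((1:ℂ)/(Real.sqrt 2:ℂ)) ^ (a * (t1+t7)).val *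
        ((-1:ℂ) ^ ((b.val + t7.val) * c.val) * (Complex.I ^ (a.val * (b+c).val) * (-1:ℂ) ^ (v.val * (b+c).val))) := by
  rcases z2 a with rfl | rfl <;> rcases z2 b with rfl | rfl <;> rcases z2 v with rfl | rfl <;>
    rcases z2 t1 with rfl | rfl <;> rcases z2 t7 with rfl | rfl <;>
    first
    | exact absurd h (by decide)
    | (norm_num [show ((1:ZMod 2)+1) = 0 from by decide, show ((2:ZMod 2)) = 0 from by decide,
        ZMod.val_one, ZMod.val_zero, show ZMod.val (2:ZMod 2) = 0 from by decide,
        zmodsum, _root_.zpow_neg, _root_.zpow_one, zpow_ofNat] <;>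
      first
      | linear_combination omega_eq
      | linear_combination omega_inv
      | linear_combination omega_pow7
      | linear_combination omega_pow7_inv
      | linear_combination Complex.I * omega_pow7 - ((Real.sqrt 2:ℂ))⁻¹ * Complex.I_sq
      | linear_combination Complex.I * omega_eq + ((Real.sqrt 2:ℂ))⁻¹ * Complex.I_sq
      | linear_combination (-Complex.I) * omega_pow7_inv - ((Real.sqrt 2:ℂ))⁻¹ * Complex.I_sq
      | linear_combination (-Complex.I) * omega_inv + ((Real.sqrt 2:ℂ))⁻¹ * Complex.I_sq)

lemma Ipow_mod (m : ℕ) : Complex.I ^ (m % 4) = Complex.I ^ m := by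
  conv_rhs => rw [← Nat.div_add_mod m 4]
  rw [pow_add, pow_mul, Complex.I_pow_four, one_pow, one_mul]

lemma star_omega_zpow (m : ℤ) : star (ω ^ m) = ω ^ (-m) := by
  rw [star_zpow₀, _root_.zpow_neg, ← _root_.inv_zpow]
  congr 1
  have : star ω = Complex.exp ((starRingEnd ℂ) ((Real.pi:ℂ) * I / 4)) := (Complex.exp_conj _).symm
  rw [this, map_div₀, _root_.map_mul, Complex.conj_I, Complex.conj_ofReal, map_ofNat,
    show (Real.pi:ℂ) * -I / 4 = -((Real.pi:ℂ) * I / 4) by ring, Complex.exp_neg, ω]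

lemma zpow_sum {ι : Type*} (s : Finset ι) (c : ι → ℤ) :
    ω ^ (∑ i ∈ s, c i) = ∏ i ∈ s, ω ^ c i := by
  classical
  induction s using Finset.cons_induction with
  | empty => simp
  | cons i s hi ih => rw [Finset.sum_cons, Finset.prod_cons, zpow_add₀ omega_ne, ih]

end TTaux

/-- Conjugation of a Pauli matrix by a transversal pattern of `T` (on `supp(t₁)`) and
`T† = T⁷` (on `supp(t₇)`) gates, with `t = t₁ + 7t₇` and `t′ = t₁ + t₇`:
`T^{⊗t} E(a,b) (T^{⊗t})† = 2^{−w_H(a∗t′)/2} Σ_{y ⪯ a∗t′} (−1)^{(b+t₇)·y} E(a, b ⊕ y)`. -/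
theorem transversal_T_Tdagger_conjugation (n : ℕ) (hn : 1 ≤ n)
    (t₁ t₇ : Fin n → ZMod 2) (hdisj : t₁ * t₇ = 0) (a b : Fin n → ZMod 2) :
    transTvec (fun i => ((t₁ i).val : ℤ) + 7 * ((t₇ i).val : ℤ)) * PauliE a b *
        (transTvec (fun i => ((t₁ i).val : ℤ) + 7 * ((t₇ i).val : ℤ)))ᴴ =
      ((1 : ℂ) / (Real.sqrt 2 : ℂ)) ^ wHam (a * (t₁ + t₇)) •
        ∑ y ∈ Finset.univ.filter
            (fun y : Fin n → ZMod 2 => ∀ i, (a * (t₁ + t₇)) i = 0 → y i = 0),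
          ((-1 : ℂ) ^ (∑ i, ((b i).val + (t₇ i).val) * (y i).val)) • PauliE a (b + y) := by
  classical
  have hd : ∀ i, t₁ i * t₇ i = 0 := fun i => congrFun hdisj i
  ext u v
  simp only [transTvec, Matrix.diagonal_conjTranspose, Matrix.mul_diagonal, Matrix.diagonal_mul,
    Matrix.smul_apply, Matrix.sum_apply, smul_eq_mul, Pi.star_apply, PauliE, Matrix.of_apply]
  by_cases h : u = v + a
  · subst h
    simp only [if_pos rfl, mul_one]
    rw [show Complex.exp ((Real.pi : ℂ) * Complex.I / 4) = TTaux.ω from rfl]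
    rw [TTaux.star_omega_zpow]
    simp only [TTaux.Ipow_mod, Pi.add_apply, Pi.mul_apply, if_true, mul_one, wHam]
    have hset : Finset.univ.filter
          (fun y : Fin n → ZMod 2 => ∀ i, a i * (t₁ i + t₇ i) = 0 → y i = 0) =
        Fintype.piFinset (fun i => if a i * (t₁ i + t₇ i) = 0 then ({0} : Finset (ZMod 2))
          else Finset.univ) := by
      ext y
      simp only [Finset.mem_filter, Finset.mem_univ, true_and, Fintype.mem_piFinset]
      refine forall_congr' fun i => ?_
      split_ifs with hi <;> simp [hi]
    rw [hset]
    rw [mul_right_comm, ← zpow_add₀ TTaux.omega_ne, ← sub_eq_add_neg, ← Finset.sum_sub_distrib,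
      TTaux.zpow_sum, ← Finset.prod_pow_eq_pow_sum, ← Finset.prod_pow_eq_pow_sum,
      ← Finset.prod_mul_distrib, ← Finset.prod_mul_distrib]
    rw [← Finset.prod_pow_eq_pow_sum]
    refine Eq.trans (Finset.prod_congr rfl fun i _ =>
      TTaux.coord (a i) (b i) (v i) (t₁ i) (t₇ i) (hd i)) ?_
    rw [Finset.prod_univ_sum, Finset.mul_sum]
    refine Finset.sum_congr rfl fun y hy => ?_
    rw [Finset.prod_mul_distrib]
    congr 1
    rw [Finset.prod_mul_distrib, Finset.prod_mul_distrib, Finset.prod_pow_eq_pow_sum,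
      Finset.prod_pow_eq_pow_sum, Finset.prod_pow_eq_pow_sum]
  · simp [h]

end
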